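/- Let λ₀, s₀ : ℤ → ℝ, fix n ≥ 1 and an integer x₀. Assume λ_{n−1}(x), λ_n(x), s_{n−1}(x), s_n(x) are all nonzero for every x ∈ ℤ, and assume the terminating condition s_n(x)λ_{n−1}(x) = s_{n−1}(x)λ_n(x) holds for all x ∈ ℤ. Define y on integers x ≥ x₀ by y(x) = ∏_{i=x₀}^{x−1} (1 − s_{n−1}(i)/λ_{n−1}(i)). Then (Δ^{n+1}y)(x) = 0 for every integer x ≥ x₀; that is, y agrees on {x ∈ ℤ : x ≥ x₀} with a polynomial of degree at most n. -/

import Mathlib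

/-- Forward difference operator on functions `ℤ → ℝ`: `(Δ f)(x) = f(x+1) - f(x)`. -/
noncomputable def fd (f : ℤ → ℝ) : ℤ → ℝ := fun x => f (x + 1) - f x

/-- The DAIM sequences `(λ_n, s_n)` built from `(λ₀, s₀)`. -/
noncomputable def daim (l0 s0 : ℤ → ℝ) : ℕ → (ℤ → ℝ) × (ℤ → ℝ)
  | 0 => (l0, s0)
  | n + 1 =>
      (fun x => fd (daim l0 s0 n).1 x + (daim l0 s0 n).1 (x + 1) * l0 x
          + (daim l0 s0 n).2 (x + 1),
       fun x => fd (daim l0 s0 n).2 x + (daim l0 s0 n).1 (x + 1) * s0 x)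

lemma fd_iter_zero (g : ℤ → ℝ) (x0 : ℤ) (h : ∀ x, x0 ≤ x → g x = 0) :
    ∀ (k : ℕ) (x : ℤ), x0 ≤ x → fd^[k] g x = 0 := by
  intro k
  induction k with
  | zero => simpa using h
  | succ k ih =>
    intro x hx
    rw [Function.iterate_succ_apply']
    show fd^[k] g (x+1) - fd^[k] g x = 0
    rw [ih (x+1) (by omega), ih x hx, sub_zero]

lemma newton (x0 : ℤ) : ∀ (t : ℕ) (f : ℤ → ℝ),
    f (x0 + t) = ∑ k ∈ Finset.range (t + 1), (t.choose k : ℝ) * fd^[k] f x0 := by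
  intro t
  induction t with
  | zero => intro f; simp
  | succ t ih =>
    intro f
    have harg : (x0 + ((t : ℕ) + 1 : ℕ) : ℤ) = (x0 + t) + 1 := by push_cast; ring
    have key : f (x0 + ((t : ℕ) + 1 : ℕ)) = f (x0 + t) + fd f (x0 + t) := by
      rw [harg]; show f ((x0+t)+1) = f (x0+t) + (f ((x0+t)+1) - f (x0+t)); ring
    rw [key, ih f, ih (fd f)]
    have h1 : ∑ k ∈ Finset.range (t + 2), ((t+1).choose k : ℝ) * fd^[k] f x0
        = (∑ k ∈ Finset.range (t + 1), ((t+1).choose (k+1) : ℝ) * fd^[k+1] f x0)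
          + ((t+1).choose 0 : ℝ) * fd^[0] f x0 := Finset.sum_range_succ' _ _
    have h2 : ∀ k, ((t+1).choose (k+1) : ℝ) = (t.choose k : ℝ) + (t.choose (k+1) : ℝ) := by
      intro k; rw [Nat.choose_succ_succ]; push_cast; ring
    have h3 : ∀ k, fd^[k+1] f x0 = fd^[k] (fd f) x0 := by
      intro k; rw [Function.iterate_succ_apply]
    have h4 : ∑ k ∈ Finset.range (t + 2), (t.choose k : ℝ) * fd^[k] f x0
        = (∑ k ∈ Finset.range (t + 1), (t.choose (k+1) : ℝ) * fd^[k+1] f x0)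
          + (t.choose 0 : ℝ) * fd^[0] f x0 := Finset.sum_range_succ' _ _
    have h5 : ∑ k ∈ Finset.range (t + 2), (t.choose k : ℝ) * fd^[k] f x0
        = ∑ k ∈ Finset.range (t + 1), (t.choose k : ℝ) * fd^[k] f x0 := by
      rw [Finset.sum_range_succ]
      simp [Nat.choose_eq_zero_of_lt (by omega : t < t + 1)]
    rw [h1]
    simp only [h2, h3, add_mul]
    rw [Finset.sum_add_distrib]
    have h6 : ∑ k ∈ Finset.range (t + 1), (t.choose (k+1) : ℝ) * fd^[k] (fd f) x0
        = ∑ k ∈ Finset.range (t + 1), (t.choose k : ℝ) * fd^[k] f x0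
          - (t.choose 0 : ℝ) * fd^[0] f x0 := by
      rw [← h5, h4]
      simp only [h3]
      ring
    rw [h6]
    simp only [Function.iterate_zero_apply, Nat.choose_zero_right, Nat.cast_one, one_mul]
    ring

lemma prod_sub_eq (t : ℕ) : ∀ k : ℕ,
    ∏ j ∈ Finset.range k, ((t : ℝ) - j) = (k.factorial : ℝ) * (t.choose k : ℝ) := by
  intro k
  induction k with
  | zero => simp
  | succ k ih =>
    rw [Finset.prod_range_succ, ih]
    rcases lt_or_ge t (k+1) with h | h
    · have h1 : t.choose (k+1) = 0 := Nat.choose_eq_zero_of_lt h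
      rcases Nat.lt_or_ge t k with h2 | h2
      · simp [Nat.choose_eq_zero_of_lt h2, h1]
      · have ht : t = k := by omega
        subst ht
        simp [h1]
    · have hc := Nat.choose_succ_right_eq t k
      have hcast : ((t - k : ℕ) : ℝ) = (t : ℝ) - k := by
        rw [Nat.cast_sub (by omega : k ≤ t)]
      have hcr : (t.choose (k+1) : ℝ) * (k+1) = (t.choose k : ℝ) * ((t:ℝ) - k) := by
        rw [← hcast]; exact_mod_cast congrArg (Nat.cast : ℕ → ℝ) hc
      have hfact : ((k+1).factorial : ℝ) = (k.factorial : ℝ) * (k+1) := by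
        rw [Nat.factorial_succ]; push_cast; ring
      rw [hfact]
      nlinarith [hcr]

lemma daim_diff (l0 s0 : ℤ → ℝ) (y : ℤ → ℝ) (x0 : ℤ)
    (hbase : ∀ x, x0 ≤ x → fd (fd y) x = l0 x * fd y x + s0 x * y x) :
    ∀ (k : ℕ) (x : ℤ), x0 ≤ x → fd^[k+2] y x =
      (daim l0 s0 k).1 x * fd y x + (daim l0 s0 k).2 x * y x := by
  intro k
  induction k with
  | zero =>
    intro x hx
    show fd (fd y) x = _
    rw [hbase x hx]; simp [daim]
  | succ k ih =>
    intro x hx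
    have h1 := ih x hx
    have h2 := ih (x+1) (by omega)
    have hb := hbase x hx
    have hstep : fd^[k+3] y x = fd^[k+2] y (x+1) - fd^[k+2] y x := by
      rw [Function.iterate_succ_apply']; rfl
    rw [hstep, h2, h1]
    have hfd1 : fd y (x+1) = fd y x + (l0 x * fd y x + s0 x * y x) := by
      rw [← hb]; show fd y (x+1) = fd y x + (fd y (x+1) - fd y x); ring
    have hy1 : y (x+1) = y x + fd y x := by
      show y (x+1) = y x + (y (x+1) - y x); ring
    rw [hfd1, hy1]
    show _ = (fd (daim l0 s0 k).1 x + (daim l0 s0 k).1 (x + 1) * l0 x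
          + (daim l0 s0 k).2 (x + 1)) * fd y x
        + (fd (daim l0 s0 k).2 x + (daim l0 s0 k).1 (x + 1) * s0 x) * y x
    simp only [fd]
    ring
theorem stmt_6 (l0 s0 : ℤ → ℝ) (n : ℕ) (hn : 1 ≤ n) (x0 : ℤ)
    (hl1 : ∀ x : ℤ, (daim l0 s0 (n - 1)).1 x ≠ 0)
    (hl2 : ∀ x : ℤ, (daim l0 s0 n).1 x ≠ 0)
    (hs1 : ∀ x : ℤ, (daim l0 s0 (n - 1)).2 x ≠ 0)
    (hs2 : ∀ x : ℤ, (daim l0 s0 n).2 x ≠ 0)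
    (hterm : ∀ x : ℤ,
      (daim l0 s0 n).2 x * (daim l0 s0 (n - 1)).1 x
        = (daim l0 s0 (n - 1)).2 x * (daim l0 s0 n).1 x)
    (y : ℤ → ℝ)
    (hy : ∀ x : ℤ, x0 ≤ x →
      y x = ∏ i ∈ Finset.Ico x0 x,
        (1 - (daim l0 s0 (n - 1)).2 i / (daim l0 s0 (n - 1)).1 i)) :
    (∀ x : ℤ, x0 ≤ x → fd^[n + 1] y x = 0) ∧
      ∃ P : Polynomial ℝ, P.natDegree ≤ n ∧ ∀ x : ℤ, x0 ≤ x → y x = P.eval (x : ℝ) := by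
  obtain ⟨m, rfl⟩ : ∃ m, n = m + 1 := ⟨n - 1, by omega⟩
  simp only [Nat.add_sub_cancel] at hl1 hl2 hs1 hs2 hterm hy
  set l : ℤ → ℝ := (daim l0 s0 m).1 with hl
  set s : ℤ → ℝ := (daim l0 s0 m).2 with hs
  have hstep : ∀ x, x0 ≤ x → y (x + 1) = (1 - s x / l x) * y x := by
    intro x hx
    have hins : Finset.Ico x0 (x + 1) = insert x (Finset.Ico x0 x) := by
      ext a; simp only [Finset.mem_insert, Finset.mem_Ico]; omega
    rw [hy x hx, hy (x + 1) (by omega), hins, Finset.prod_insert Finset.right_notMem_Ico]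
  have hfd : ∀ x, x0 ≤ x → fd y x = -(s x / l x) * y x := by
    intro x hx
    show y (x + 1) - y x = _
    rw [hstep x hx]
    ring
  have hbase : ∀ x, x0 ≤ x → fd (fd y) x = l0 x * fd y x + s0 x * y x := by
    intro x hx
    have e1 := hfd x hx
    have e2 := hfd (x + 1) (by omega)
    have e3 := hstep x hx
    have ht := hterm x
    have hd2 : (daim l0 s0 (m+1)).2 x = fd s x + l (x+1) * s0 x := rfl
    have hd1 : (daim l0 s0 (m+1)).1 x = fd l x + l (x+1) * l0 x + s (x+1) := rfl
    rw [hd1, hd2] at ht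
    simp only [fd] at ht
    show fd y (x + 1) - fd y x = _
    rw [e2, e3, e1]
    have h1 := hl1 x
    have h2 := hl1 (x + 1)
    have e4 : s (x + 1) / l (x + 1) * (1 - s x / l x) = s x / l x * (1 + l0 x) - s0 x := by
      field_simp
      linear_combination ht
    linear_combination (-(y x)) * e4
  have hkey : ∀ x, x0 ≤ x → fd^[m+2] y x = 0 := by
    intro x hx
    rw [daim_diff l0 s0 y x0 hbase m x hx, ← hl, ← hs, hfd x hx]
    have h1 := hl1 x
    field_simp
    ring
  refine ⟨hkey, ?_⟩
  have hhigh : ∀ k, m + 2 ≤ k → fd^[k] y x0 = 0 := by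
    intro k hk
    obtain ⟨j, rfl⟩ : ∃ j, k = j + (m + 2) := ⟨k - (m + 2), by omega⟩
    rw [Function.iterate_add_apply]
    exact fd_iter_zero _ x0 hkey j x0 le_rfl
  refine ⟨∑ k ∈ Finset.range (m + 2),
      Polynomial.C (fd^[k] y x0 / k.factorial) *
        ∏ j ∈ Finset.range k, (Polynomial.X - Polynomial.C ((x0 : ℝ) + j)), ?_, ?_⟩
  · apply Polynomial.natDegree_sum_le_of_forall_le
    intro k hk
    calc (Polynomial.C (fd^[k] y x0 / k.factorial) *
          ∏ j ∈ Finset.range k, (Polynomial.X - Polynomial.C ((x0 : ℝ) + j))).natDegree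
        ≤ (∏ j ∈ Finset.range k, (Polynomial.X - Polynomial.C ((x0 : ℝ) + j))).natDegree :=
          Polynomial.natDegree_C_mul_le _ _
      _ ≤ ∑ j ∈ Finset.range k, (Polynomial.X - Polynomial.C ((x0 : ℝ) + j)).natDegree :=
          Polynomial.natDegree_prod_le _ _
      _ ≤ m + 1 := by
          simp only [Polynomial.natDegree_X_sub_C]
          simp only [Finset.sum_const, Finset.card_range, smul_eq_mul, mul_one]
          have hk' := Finset.mem_range.mp hk
          omega
  · intro x hx
    obtain ⟨t, rfl⟩ : ∃ t : ℕ, x = x0 + t := ⟨(x - x0).toNat, by omega⟩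
    have heval : Polynomial.eval ((x0 + (t : ℕ) : ℤ) : ℝ)
          (∑ k ∈ Finset.range (m + 2),
            Polynomial.C (fd^[k] y x0 / k.factorial) *
              ∏ j ∈ Finset.range k, (Polynomial.X - Polynomial.C ((x0 : ℝ) + j)))
        = ∑ k ∈ Finset.range (m + 2), (t.choose k : ℝ) * fd^[k] y x0 := by
      rw [Polynomial.eval_finset_sum]
      refine Finset.sum_congr rfl fun k _ => ?_
      rw [Polynomial.eval_mul, Polynomial.eval_C, Polynomial.eval_prod]
      have hp : ∏ j ∈ Finset.range k,
            Polynomial.eval ((x0 + (t : ℕ) : ℤ) : ℝ) (Polynomial.X - Polynomial.C ((x0 : ℝ) + j))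
          = ∏ j ∈ Finset.range k, ((t : ℝ) - j) := by
        refine Finset.prod_congr rfl fun j _ => ?_
        simp only [Polynomial.eval_sub, Polynomial.eval_X, Polynomial.eval_C]
        push_cast
        ring
      rw [hp, prod_sub_eq]
      have hf : (k.factorial : ℝ) ≠ 0 := by positivity
      field_simp
    rw [heval, newton x0 t y]
    rcases le_total (t + 1) (m + 2) with h | h
    · refine Finset.sum_subset (Finset.range_subset_range.mpr h) fun k _ hk => ?_
      have : t < k := by simpa using hk
      simp [Nat.choose_eq_zero_of_lt this]
    · refine (Finset.sum_subset (Finset.range_subset_range.mpr h) fun k _ hk => ?_).symm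
      have : m + 2 ≤ k := by simpa using hk
      simp [hhigh k this]
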